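/- Let G = P_s □ P_t be a grid graph with s, t ≥ 2, and let k be an integer with 2 ≤ k ≤ s + t − 2. Then every k-resolving set for G has size at least 2k. -/

import Mathlib

open SimpleGraph

/-- In the path graph there is a walk of length `d` from `i` to `j` whenever `i + d = j`. -/
lemma pathGraph_walk_up {n : ℕ} : ∀ (d : ℕ) (i j : Fin n), i.val + d = j.val →
    ∃ w : (SimpleGraph.pathGraph n).Walk i j, w.length = d := by
  intro d
  induction d with
  | zero =>
    intro i j h
    have : i = j := Fin.ext (by omega)
    subst this
    exact ⟨.nil, rfl⟩
  | succ d ih =>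
    intro i j h
    have hj := j.isLt
    have hi1 : i.val + 1 < n := by omega
    let i' : Fin n := ⟨i.val + 1, hi1⟩
    have hadj : (SimpleGraph.pathGraph n).Adj i i' := pathGraph_adj.mpr (Or.inl rfl)
    obtain ⟨w, hw⟩ := ih i' j (by simp only [i']; omega)
    exact ⟨.cons hadj w, by simp [hw]⟩

lemma pathGraph_walk_dist {n : ℕ} (i j : Fin n) :
    ∃ w : (SimpleGraph.pathGraph n).Walk i j, w.length = Nat.dist i.val j.val := by
  rcases le_total i.val j.val with h | h
  · obtain ⟨w, hw⟩ := pathGraph_walk_up (j.val - i.val) i j (by omega)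
    exact ⟨w, by rw [hw, Nat.dist]; omega⟩
  · obtain ⟨w, hw⟩ := pathGraph_walk_up (i.val - j.val) j i (by omega)
    exact ⟨w.reverse, by rw [SimpleGraph.Walk.length_reverse, hw, Nat.dist]; omega⟩

/-- Lower bound: every walk in the grid has length at least the ℓ¹ distance. -/
lemma grid_walk_length_lb {s t : ℕ} {x y : Fin s × Fin t}
    (w : ((SimpleGraph.pathGraph s).boxProd (SimpleGraph.pathGraph t)).Walk x y) :
    Nat.dist x.1.val y.1.val + Nat.dist x.2.val y.2.val ≤ w.length := by
  induction w with
  | nil => simp [Nat.dist]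
  | @cons a b c hadj w ih =>
    rw [SimpleGraph.Walk.length_cons]
    rcases SimpleGraph.boxProd_adj.mp hadj with ⟨h1, h2⟩ | ⟨h1, h2⟩
    · have hd : Nat.dist a.1.val b.1.val = 1 := by
        rcases pathGraph_adj.mp h1 with h | h <;> simp [Nat.dist] <;> omega
      have t1 := Nat.dist.triangle_inequality a.1.val b.1.val c.1.val
      have t2 : Nat.dist a.2.val c.2.val = Nat.dist b.2.val c.2.val := by rw [h2]
      omega
    · have hd : Nat.dist a.2.val b.2.val = 1 := by
        rcases pathGraph_adj.mp h1 with h | h <;> simp [Nat.dist] <;> omega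
      have t1 := Nat.dist.triangle_inequality a.2.val b.2.val c.2.val
      have t2 : Nat.dist a.1.val c.1.val = Nat.dist b.1.val c.1.val := by rw [h2]
      omega

/-- Distance formula in the grid graph. -/
lemma grid_dist {s t : ℕ} (hs : 1 ≤ s) (ht : 1 ≤ t) (x y : Fin s × Fin t) :
    ((SimpleGraph.pathGraph s).boxProd (SimpleGraph.pathGraph t)).dist x y
      = Nat.dist x.1.val y.1.val + Nat.dist x.2.val y.2.val := by
  obtain ⟨s, rfl⟩ : ∃ s', s = s' + 1 := ⟨s - 1, by omega⟩
  obtain ⟨t, rfl⟩ : ∃ t', t = t' + 1 := ⟨t - 1, by omega⟩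
  have hconn : ((SimpleGraph.pathGraph (s+1)).boxProd (SimpleGraph.pathGraph (t+1))).Connected :=
    (pathGraph_connected s).boxProd (pathGraph_connected t)
  obtain ⟨x1, x2⟩ := x
  obtain ⟨y1, y2⟩ := y
  apply le_antisymm
  · obtain ⟨w1, hw1⟩ := pathGraph_walk_dist x1 y1
    obtain ⟨w2, hw2⟩ := pathGraph_walk_dist x2 y2
    refine le_trans (SimpleGraph.dist_le
      ((SimpleGraph.Walk.boxProdLeft (SimpleGraph.pathGraph (t+1)) x2 w1).append
        (SimpleGraph.Walk.boxProdRight (SimpleGraph.pathGraph (s+1)) y1 w2))) ?_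
    rw [SimpleGraph.Walk.length_append]
    simp [SimpleGraph.Walk.length_append, SimpleGraph.Walk.boxProdLeft,
      SimpleGraph.Walk.boxProdRight, SimpleGraph.Walk.length_map, hw1, hw2]
    exact le_of_eq (congrArg₂ (· + ·) ((SimpleGraph.Walk.length_map _ w1).trans hw1)
      ((SimpleGraph.Walk.length_map _ w2).trans hw2))
  · obtain ⟨w, hw⟩ := hconn.exists_walk_length_eq_dist (x1, x2) (y1, y2)
    rw [← hw]
    exact grid_walk_length_lb w

/-- A finset `S` of vertices is a `k`-resolving set for `G`: any two distinct vertices `u, w`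
have different distances to at least `k` vertices of `S`. -/
def IsKResolvingSet {V : Type*} [DecidableEq V] (G : SimpleGraph V) (k : ℕ) (S : Finset V) : Prop :=
  ∀ u w : V, u ≠ w → k ≤ (S.filter (fun v => G.dist u v ≠ G.dist w v)).card

/-- In the grid graph `P_s □ P_t` with `s, t ≥ 2`, for any `k` with `2 ≤ k ≤ s + t - 2`,
every `k`-resolving set has size at least `2k`. -/
theorem grid_kResolvingSet_lower_bound (s t : ℕ) (hs : 2 ≤ s) (ht : 2 ≤ t)
    (k : ℕ) (hk1 : 2 ≤ k) (hk2 : k ≤ s + t - 2)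
    (S : Finset (Fin s × Fin t))
    (hS : IsKResolvingSet ((SimpleGraph.pathGraph s).boxProd (SimpleGraph.pathGraph t)) k S) :
    2 * k ≤ S.card := by
  set G := (SimpleGraph.pathGraph s).boxProd (SimpleGraph.pathGraph t) with hG
  have hs1 : (1:ℕ) ≤ s := by omega
  have ht1 : (1:ℕ) ≤ t := by omega
  -- the four vertices
  let z : Fin s × Fin t := (⟨0, by omega⟩, ⟨0, by omega⟩)
  let u1 : Fin s × Fin t := (⟨0, by omega⟩, ⟨1, by omega⟩)
  let w1 : Fin s × Fin t := (⟨1, by omega⟩, ⟨0, by omega⟩)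
  let w2 : Fin s × Fin t := (⟨1, by omega⟩, ⟨1, by omega⟩)
  have h1 := hS u1 w1 (by simp [u1, w1, Prod.ext_iff, Fin.ext_iff])
  have h2 := hS z w2 (by simp [z, w2, Prod.ext_iff, Fin.ext_iff])
  set A := S.filter (fun v => G.dist u1 v ≠ G.dist w1 v) with hA
  set B := S.filter (fun v => G.dist z v ≠ G.dist w2 v) with hB
  have hdisj : Disjoint A B := by
    rw [hA, hB, Finset.disjoint_filter]
    intro v _ hv1 hv2
    rw [hG, grid_dist hs1 ht1, grid_dist hs1 ht1] at hv1
    rw [hG, grid_dist hs1 ht1, grid_dist hs1 ht1] at hv2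
    simp only [u1, w1, z, w2, Nat.dist] at hv1 hv2
    omega
  have hsub : A ∪ B ⊆ S := by
    intro v hv
    rcases Finset.mem_union.mp hv with h | h
    · exact Finset.mem_of_mem_filter v h
    · exact Finset.mem_of_mem_filter v h
  calc 2 * k = k + k := by ring
    _ ≤ A.card + B.card := Nat.add_le_add h1 h2
    _ = (A ∪ B).card := (Finset.card_union_of_disjoint hdisj).symm
    _ ≤ S.card := Finset.card_le_card hsub
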